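/- For every natural number d there exists a natural number j (depending only on d) such that every finite subgroup G of the general linear group GL_d(ℂ) contains a normal abelian subgroup A of G whose index [G : A] is at most j. -/

import Mathlib

open scoped Matrix.Norms.L2Operator

section Aux

variable {E : Type*} [NormedRing E]

/-- commutator difference bound in any normed ring -/
lemma norm_mul_sub_mul_le (a b : E) : ‖a * b - b * a‖ ≤ 2 * ‖a - 1‖ * ‖b - 1‖ := by
  have h : a * b - b * a = (a - 1) * (b - 1) - (b - 1) * (a - 1) := by noncomm_ring
  calc ‖a * b - b * a‖ = ‖(a - 1) * (b - 1) - (b - 1) * (a - 1)‖ := by rw [h]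
    _ ≤ ‖(a - 1) * (b - 1)‖ + ‖(b - 1) * (a - 1)‖ := norm_sub_le _ _
    _ ≤ ‖a - 1‖ * ‖b - 1‖ + ‖b - 1‖ * ‖a - 1‖ := by
        gcongr <;> exact norm_mul_le _ _
    _ = 2 * ‖a - 1‖ * ‖b - 1‖ := by ring

variable [NormedSpace ℂ E] [IsScalarTower ℂ E E] [SMulCommClass ℂ E E]

/-- averaging projection: if all powers of `M` stay close to `1`, then `M = 1`. -/
lemma eq_one_of_norm_pow_sub_one_le {M : E} {m : ℕ} (hm0 : 0 < m) (hm : M ^ m = 1)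
    (h : ∀ k, ‖M ^ k - 1‖ ≤ 4 / 5) : M = 1 := by
  set Q : E := ∑ j ∈ Finset.range m, M ^ j with hQ
  have hMQ : M * Q = Q := by
    have h1 : ∑ j ∈ Finset.range (m + 1), M ^ j = Q + M ^ m := Finset.sum_range_succ _ m
    have h2 : ∑ j ∈ Finset.range (m + 1), M ^ j
        = (∑ j ∈ Finset.range m, M ^ (j + 1)) + M ^ 0 := Finset.sum_range_succ' _ m
    have h3 : M * Q = ∑ j ∈ Finset.range m, M ^ (j + 1) := by
      rw [hQ, Finset.mul_sum]
      exact Finset.sum_congr rfl fun j _ => by rw [pow_succ']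
    rw [h3]
    have := h2.symm.trans h1
    rw [hm, pow_zero] at this
    linear_combination (norm := abel) this
  set P : E := ((m : ℂ))⁻¹ • Q with hP
  have hMP : M * P = P := by rw [hP, mul_smul_comm, hMQ]
  have hjP : ∀ j : ℕ, M ^ j * P = P := by
    intro j; induction j with
    | zero => simp
    | succ n ih => rw [pow_succ, mul_assoc, hMP, ih]
  have hQP : (m : ℂ) • P = Q := by
    rw [hP, smul_smul, mul_inv_cancel₀ (by exact_mod_cast hm0.ne'), one_smul]
  have key : ∀ j : ℕ, (1 - M ^ j) * (1 - P) = 1 - M ^ j := by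
    intro j
    have expand : (1 - M ^ j) * (1 - P) = 1 - P - M ^ j + M ^ j * P := by noncomm_ring
    rw [expand, hjP]; abel
  have hsum : ∑ j ∈ Finset.range m, (1 - M ^ j) = (m : ℂ) • (1 - P) := by
    rw [Finset.sum_sub_distrib, Finset.sum_const, Finset.card_range, smul_sub, hQP, ← hQ]
    simp [← Nat.cast_smul_eq_nsmul ℂ]
  have hnorm : (m : ℝ) * ‖1 - P‖ ≤ (m : ℝ) * (4 / 5) * ‖1 - P‖ := by
    have e1 : ‖(m : ℂ) • (1 - P)‖ = (m : ℝ) * ‖1 - P‖ := by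
      rw [norm_smul]; simp
    calc (m : ℝ) * ‖1 - P‖ = ‖(m : ℂ) • (1 - P)‖ := e1.symm
      _ = ‖∑ j ∈ Finset.range m, (1 - M ^ j) * (1 - P)‖ := by
          rw [← hsum]
          congr 1
          exact Finset.sum_congr rfl fun j _ => (key j).symm
      _ ≤ ∑ j ∈ Finset.range m, ‖(1 - M ^ j) * (1 - P)‖ := norm_sum_le _ _
      _ ≤ ∑ j ∈ Finset.range m, (4 / 5) * ‖1 - P‖ := by
          refine Finset.sum_le_sum fun j _ => ?_
          calc ‖(1 - M ^ j) * (1 - P)‖ ≤ ‖1 - M ^ j‖ * ‖1 - P‖ := norm_mul_le _ _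
            _ ≤ (4 / 5) * ‖1 - P‖ := by
                have := h j
                rw [norm_sub_rev] at this
                exact mul_le_mul_of_nonneg_right this (norm_nonneg _)
      _ = (m : ℝ) * (4 / 5) * ‖1 - P‖ := by rw [Finset.sum_const, Finset.card_range]; ring
  have hm' : (0 : ℝ) < m := by exact_mod_cast hm0
  have hPn : ‖1 - P‖ = 0 := by nlinarith [norm_nonneg (1 - P)]
  have hP1 : P = 1 := by
    have := norm_eq_zero.mp hPn
    have := sub_eq_zero.mp this
    exact this.symm
  calc M = M * P := by rw [hP1, mul_one]
    _ = P := hMP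
    _ = 1 := hP1

end Aux

open Matrix in
open scoped Matrix.Norms.L2Operator in
open scoped commutatorElement in
set_option maxHeartbeats 1000000 in
theorem unitary_jordan (d : ℕ) (hd : 0 < d) :
    ∃ j : ℕ, ∀ G : Subgroup (GL (Fin d) ℂ), Finite G →
      (∀ g : G, ((g : GL (Fin d) ℂ) : Matrix (Fin d) (Fin d) ℂ) ∈ Matrix.unitaryGroup (Fin d) ℂ) →
      ∃ A : Subgroup G, A.Normal ∧ (∀ x y : A, x * y = y * x) ∧ A.index ≤ j := by
  haveI : Nontrivial (Matrix (Fin d) (Fin d) ℂ) := by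
    refine ⟨0, 1, fun h => ?_⟩
    have h0 := congrFun (congrFun h ⟨0, hd⟩) ⟨0, hd⟩
    rw [Matrix.one_apply_eq] at h0
    exact zero_ne_one (h0 : (0:ℂ) = 1)
  haveI : ProperSpace (Matrix (Fin d) (Fin d) ℂ) := FiniteDimensional.proper ℂ _
  obtain ⟨t, -, htfin, hcov⟩ := finite_cover_balls_of_compact
    (isCompact_closedBall (0 : Matrix (Fin d) (Fin d) ℂ) 2) (show (0:ℝ) < 1/10 by norm_num)
  refine ⟨htfin.toFinset.card, fun G hGfin hGU => ?_⟩
  haveI := hGfin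
  set π : G →* Matrix (Fin d) (Fin d) ℂ := (Units.coeHom _).comp G.subtype with hπdef
  have hu : ∀ g : G, π g ∈ unitary (Matrix (Fin d) (Fin d) ℂ) := hGU
  have hπ1 : ∀ g : G, ‖π g‖ = 1 := fun g => CStarRing.norm_of_mem_unitary (hu g)
  have hinj : Function.Injective π := fun a b h => Subtype.ext (Units.ext h)
  -- conjugation preserves distance to 1
  have hconj : ∀ g h : G, ‖π (g * h * g⁻¹) - 1‖ = ‖π h - 1‖ := by
    intro g h
    have e : π (g * h * g⁻¹) - 1 = π g * ((π h - 1) * π g⁻¹) := by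
      have e2 : π g * ((π h - 1) * π g⁻¹) = π g * π h * π g⁻¹ - π g * π g⁻¹ := by noncomm_ring
      rw [e2, ← _root_.map_mul, ← _root_.map_mul, ← _root_.map_mul, mul_inv_cancel, _root_.map_one]
    rw [e, CStarRing.norm_mem_unitary_mul _ (hu g), CStarRing.norm_mul_mem_unitary _ (hu g⁻¹)]
  -- commutator bound
  have hcb : ∀ a b : G, ‖π ⁅a, b⁆ - 1‖ ≤ 2 * ‖π a - 1‖ * ‖π b - 1‖ := by
    intro a b
    have e : π ⁅a, b⁆ - 1 = (π a * π b - π b * π a) * π (a⁻¹ * b⁻¹) := by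
      have e1 : π ⁅a, b⁆ = (π a * π b) * π (a⁻¹ * b⁻¹) := by
        rw [← _root_.map_mul, ← _root_.map_mul, commutatorElement_def]; congr 1; group
      have e2 : (1 : Matrix (Fin d) (Fin d) ℂ) = (π b * π a) * π (a⁻¹ * b⁻¹) := by
        rw [← _root_.map_mul, ← _root_.map_mul]
        have : b * a * (a⁻¹ * b⁻¹) = 1 := by group
        rw [this, _root_.map_one]
      rw [e1]
      calc π a * π b * π (a⁻¹ * b⁻¹) - 1
          = π a * π b * π (a⁻¹ * b⁻¹) - π b * π a * π (a⁻¹ * b⁻¹) := by rw [← e2]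
        _ = (π a * π b - π b * π a) * π (a⁻¹ * b⁻¹) := by noncomm_ring
    rw [e, CStarRing.norm_mul_mem_unitary _ (hu _)]
    exact norm_mul_sub_mul_le _ _
  set S : Set G := {g | ‖π g - 1‖ ≤ 1/5} with hSdef
  set A : Subgroup G := Subgroup.closure S with hAdef
  -- the heart: elements of S pairwise commute
  have hSS : ∀ a b : G, a ∈ S → b ∈ S → a * b = b * a := by
    intro a₀ b₀ ha₀ hb₀
    by_contra hcne
    set T : Set (G × G) := {p | p.1 ∈ S ∧ p.2 ∈ S ∧ p.1 * p.2 ≠ p.2 * p.1} with hTdef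
    have hTne : T.Nonempty := ⟨(a₀, b₀), ha₀, hb₀, hcne⟩
    obtain ⟨⟨a, b⟩, hmemT, hmin⟩ :=
      Set.exists_min_image T (fun p => ‖π ⁅p.1, p.2⁆ - 1‖) (Set.toFinite T) hTne
    obtain ⟨haS, hbS, hab⟩ := hmemT
    set c : G := ⁅a, b⁆ with hcdef
    have hc1 : c ≠ 1 := fun h => hab (commutatorElement_eq_one_iff_mul_comm.mp h)
    have hcpos : 0 < ‖π c - 1‖ := by
      rw [norm_pos_iff]
      exact sub_ne_zero.mpr fun h => hc1 (hinj (h.trans (_root_.map_one π).symm))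
    have hcS : c ∈ S := by
      have h1 := hcb a b
      have h2 : ‖π a - 1‖ ≤ 1/5 := haS
      have h3 : ‖π b - 1‖ ≤ 1/5 := hbS
      have := norm_nonneg (π a - 1); have := norm_nonneg (π b - 1)
      show ‖π c - 1‖ ≤ 1/5
      nlinarith
    have hac : Commute a c := by
      by_contra h
      have hT : (a, c) ∈ T := ⟨haS, hcS, h⟩
      have h1 := hmin (a, c) hT
      have h2 := hcb a c
      have h3 : ‖π a - 1‖ ≤ 1/5 := haS
      simp only at h1
      nlinarith [norm_nonneg (π c - 1)]
    have hbc : Commute b c := by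
      by_contra h
      have hT : (b, c) ∈ T := ⟨hbS, hcS, h⟩
      have h1 := hmin (b, c) hT
      have h2 := hcb b c
      have h3 : ‖π b - 1‖ ≤ 1/5 := hbS
      simp only at h1
      nlinarith [norm_nonneg (π c - 1)]
    have hC : a * b = c * b * a := by rw [hcdef, commutatorElement_def]; group
    have key : ∀ k : ℕ, a ^ k * b = c ^ k * b * a ^ k := by
      intro k; induction k with
      | zero => simp
      | succ n ih =>
        calc a ^ (n+1) * b = a * (a ^ n * b) := by group
          _ = a * (c ^ n * b * a ^ n) := by rw [ih]
          _ = (a * c ^ n) * (b * a ^ n) := by group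
          _ = (c ^ n * a) * (b * a ^ n) := by rw [(hac.pow_right n).eq]
          _ = c ^ n * (a * b) * a ^ n := by group
          _ = c ^ n * (c * b * a) * a ^ n := by rw [hC]
          _ = c ^ (n+1) * b * a ^ (n+1) := by group
    have hck : ∀ k : ℕ, c ^ k = ⁅a ^ k, b⁆ := by
      intro k
      have h := key k
      rw [commutatorElement_def, h]; group
    have hbound : ∀ k : ℕ, ‖(π c) ^ k - 1‖ ≤ 4 / 5 := by
      intro k
      rw [← _root_.map_pow]
      have h1 : ‖π (c ^ k) - 1‖ ≤ 2 * ‖π (a ^ k) - 1‖ * ‖π b - 1‖ := by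
        rw [hck k]; exact hcb (a ^ k) b
      have h2 : ‖π (a ^ k) - 1‖ ≤ 2 := by
        calc ‖π (a ^ k) - 1‖ ≤ ‖π (a ^ k)‖ + ‖(1 : Matrix (Fin d) (Fin d) ℂ)‖ := norm_sub_le _ _
          _ = 2 := by rw [hπ1, norm_one]; norm_num
      have h3 : ‖π b - 1‖ ≤ 1/5 := hbS
      nlinarith [norm_nonneg (π (a ^ k) - 1), norm_nonneg (π b - 1)]
    have : π c = 1 :=
      eq_one_of_norm_pow_sub_one_le (orderOf_pos c)
        (by rw [← _root_.map_pow, pow_orderOf_eq_one, _root_.map_one]) hbound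
    exact hc1 (hinj (this.trans (_root_.map_one π).symm))
  refine ⟨A, ?_, ?_, ?_⟩
  · -- normality
    constructor
    intro x hx g
    refine Subgroup.closure_induction
      (p := fun y _ => g * y * g⁻¹ ∈ A) ?_ ?_ ?_ ?_ hx
    · intro y hy
      refine Subgroup.subset_closure ?_
      show ‖π (g * y * g⁻¹) - 1‖ ≤ 1/5
      rw [hconj g y]; exact hy
    · show g * 1 * g⁻¹ ∈ A
      have h1 : g * 1 * g⁻¹ = 1 := by group
      rw [h1]; exact one_mem A
    · intro y z _ _ hy hz
      have : g * (y * z) * g⁻¹ = (g * y * g⁻¹) * (g * z * g⁻¹) := by group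
      rw [this]; exact mul_mem hy hz
    · intro y _ hy
      have : g * y⁻¹ * g⁻¹ = (g * y * g⁻¹)⁻¹ := by group
      rw [this]; exact inv_mem hy
  · -- abelian
    intro x y
    have h : ∀ u v : G, u ∈ A → v ∈ A → Commute u v := by
      intro u v hu hv
      exact Subgroup.closure_induction₂
        (p := fun u v _ _ => Commute u v)
        (fun u v hu hv => hSS u v hu hv)
        (fun x _ => Commute.one_left x) (fun x _ => Commute.one_right x)
        (fun x y z _ _ _ h1 h2 => h1.mul_left h2)
        (fun y z x _ _ _ h1 h2 => h1.mul_right h2)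
        (fun x y _ _ h1 => h1.inv_left)
        (fun x y _ _ h1 => h1.inv_right) hu hv
    exact Subtype.ext (h x y x.2 y.2)
  · -- index bound
    set f : G ⧸ A → Matrix (Fin d) (Fin d) ℂ := fun q => π q.out with hfdef
    have hsep : ∀ q r : G ⧸ A, q ≠ r → 1/5 < ‖f q - f r‖ := by
      intro q r hqr
      have hgh : q.out⁻¹ * r.out ∉ A := by
        intro hmem
        refine hqr ?_
        rw [← QuotientGroup.out_eq' q, ← QuotientGroup.out_eq' r]
        exact (QuotientGroup.eq).mpr hmem
      have hnS : q.out⁻¹ * r.out ∉ S := fun h => hgh (Subgroup.subset_closure h)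
      have h5 : 1/5 < ‖π (q.out⁻¹ * r.out) - 1‖ := lt_of_not_ge hnS
      have e : ‖f q - f r‖ = ‖π (q.out⁻¹ * r.out) - 1‖ := by
        have e1 : π q.out⁻¹ * (f q - f r) = 1 - π (q.out⁻¹ * r.out) := by
          rw [hfdef, mul_sub, ← _root_.map_mul, ← _root_.map_mul, inv_mul_cancel, _root_.map_one]
        rw [← CStarRing.norm_mem_unitary_mul (f q - f r) (hu q.out⁻¹), e1, norm_sub_rev]
      rw [e]; exact h5
    have hmem2 : ∀ q : G ⧸ A, f q ∈ Metric.closedBall (0 : Matrix (Fin d) (Fin d) ℂ) 2 := by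
      intro q
      rw [Metric.mem_closedBall, dist_zero_right, hπ1]
      norm_num
    have hch : ∀ q : G ⧸ A, ∃ x ∈ t, f q ∈ Metric.ball x (1/10) := by
      intro q
      have := hcov (hmem2 q)
      simpa using this
    choose φ hφt hφb using hch
    have hinj' : Function.Injective (fun q => (⟨φ q, htfin.mem_toFinset.2 (hφt q)⟩ :
        {x // x ∈ htfin.toFinset})) := by
      intro q r h
      by_contra hqr
      have h1 := hφb q
      have h2 := hφb r
      have hφeq : φ q = φ r := congrArg Subtype.val h
      rw [Metric.mem_ball, dist_eq_norm] at h1 h2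
      have hd1 : ‖f q - f r‖ ≤ ‖f q - φ r‖ + ‖f r - φ r‖ := by
        calc ‖f q - f r‖ = ‖(f q - φ r) + (φ r - f r)‖ := by abel_nf
          _ ≤ ‖f q - φ r‖ + ‖φ r - f r‖ := norm_add_le _ _
          _ = ‖f q - φ r‖ + ‖f r - φ r‖ := by rw [norm_sub_rev (φ r)]
      have h3 := hsep q r hqr
      rw [hφeq] at h1
      linarith
    calc A.index = Nat.card (G ⧸ A) := rfl
      _ ≤ Nat.card {x // x ∈ htfin.toFinset} := Nat.card_le_card_of_injective _ hinj'
      _ = htfin.toFinset.card := Nat.card_eq_finsetCard _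

open Matrix in
open scoped ComplexOrder in
open scoped MatrixOrder in
set_option maxHeartbeats 1000000 in
theorem jordan_pos (d : ℕ) (hd : 0 < d) :
    ∃ j : ℕ, ∀ G : Subgroup (Matrix.GeneralLinearGroup (Fin d) ℂ), Finite G →
      ∃ A : Subgroup G, A.Normal ∧ (∀ x y : A, x * y = y * x) ∧ A.index ≤ j := by
  obtain ⟨j, hj⟩ := unitary_jordan d hd
  refine ⟨j, fun G hGfin => ?_⟩
  haveI := hGfin
  haveI : Fintype G := Fintype.ofFinite _
  set val : G → Matrix (Fin d) (Fin d) ℂ := fun g => ((g : GL (Fin d) ℂ) : _) with hval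
  have hval_mul : ∀ g h : G, val (g * h) = val g * val h := fun g h => rfl
  have hval_one : val 1 = 1 := rfl
  set P : Matrix (Fin d) (Fin d) ℂ := ∑ g : G, (val g)ᴴ * val g with hP
  have hPH : P.IsHermitian := by
    show Pᴴ = P
    rw [hP, Matrix.conjTranspose_sum]
    exact Finset.sum_congr rfl fun g _ => by
      rw [Matrix.conjTranspose_mul, Matrix.conjTranspose_conjTranspose]
  have hPD : P.PosDef := by
    refine Matrix.PosDef.of_dotProduct_mulVec_pos hPH fun x hx => ?_
    have keysum : ∀ s : Finset G,
        dotProduct (star x) ((∑ g ∈ s, (val g)ᴴ * val g) *ᵥ x)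
          = ∑ g ∈ s, dotProduct (star x) (((val g)ᴴ * val g) *ᵥ x) := by
      intro s
      induction s using Finset.induction with
      | empty => simp
      | insert _ _ hmem ih =>
        rw [Finset.sum_insert hmem, Finset.sum_insert hmem, Matrix.add_mulVec,
          dotProduct_add, ih]
    rw [hP, keysum]
    refine Finset.sum_pos' (fun g _ => (Matrix.posSemidef_conjTranspose_mul_self (val g)).dotProduct_mulVec_nonneg x)
      ⟨1, Finset.mem_univ 1, ?_⟩
    rw [hval_one]
    simp only [Matrix.conjTranspose_one, Matrix.one_mul, Matrix.one_mulVec]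
    exact Matrix.dotProduct_star_self_pos_iff.mpr hx
  have hinv : ∀ g : G, (val g)ᴴ * P * val g = P := by
    intro g
    have expand : (val g)ᴴ * P * val g = ∑ h : G, (val (h * g))ᴴ * val (h * g) := by
      rw [hP, Finset.mul_sum, Finset.sum_mul]
      exact Finset.sum_congr rfl fun h _ => by
        rw [hval_mul, Matrix.conjTranspose_mul]; noncomm_ring
    rw [expand, hP]
    exact Equiv.sum_comp (Equiv.mulRight g) fun h => (val h)ᴴ * val h
  set S : Matrix (Fin d) (Fin d) ℂ := CFC.sqrt P with hS
  have hS2 : S * S = P := CFC.sqrt_mul_sqrt_self P hPD.posSemidef.nonneg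
  have hSH : Sᴴ = S := (CFC.sqrt_nonneg P).posSemidef.isHermitian
  have hSU : IsUnit S := by
    rw [Matrix.isUnit_iff_isUnit_det, isUnit_iff_ne_zero]
    intro h0
    have : P.det = 0 := by rw [← hS2, Matrix.det_mul, h0, mul_zero]
    exact hPD.det_pos.ne' this
  set u : GL (Fin d) ℂ := hSU.unit with hu
  have hu_val : (u : Matrix (Fin d) (Fin d) ℂ) = S := hSU.unit_spec
  set T : Matrix (Fin d) (Fin d) ℂ := Units.val (u⁻¹) with hT
  have hST : S * T = 1 := by rw [← hu_val, hT]; exact u.mul_inv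
  have hTS : T * S = 1 := by rw [← hu_val, hT]; exact u.inv_mul
  have hTH : Tᴴ = T := by
    have h1 : Tᴴ * S = 1 := by
      rw [← hSH, ← Matrix.conjTranspose_mul, hST, Matrix.conjTranspose_one]
    calc Tᴴ = Tᴴ * (S * T) := by rw [hST, Matrix.mul_one]
      _ = (Tᴴ * S) * T := by rw [Matrix.mul_assoc]
      _ = T := by rw [h1, Matrix.one_mul]
  set G' : Subgroup (GL (Fin d) ℂ) := Subgroup.map (MulAut.conj u).toMonoidHom G with hG'
  have e : G ≃* G' := Subgroup.equivMapOfInjective G _ (MulAut.conj u).injective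
  haveI hG'fin : Finite G' := Finite.of_equiv _ e.toEquiv
  have hG'U : ∀ g' : G',
      ((g' : GL (Fin d) ℂ) : Matrix (Fin d) (Fin d) ℂ) ∈ Matrix.unitaryGroup (Fin d) ℂ := by
    rintro ⟨-, g, hgG, rfl⟩
    have hval' : (((MulAut.conj u).toMonoidHom g : GL (Fin d) ℂ) : Matrix (Fin d) (Fin d) ℂ)
        = S * (g : Matrix (Fin d) (Fin d) ℂ) * T := by
      show ((MulAut.conj u g : GL (Fin d) ℂ) : Matrix (Fin d) (Fin d) ℂ) = _
      rw [MulAut.conj_apply, Units.val_mul, Units.val_mul, hu_val, ← hT]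
    rw [Matrix.mem_unitaryGroup_iff', hval']
    set vg : Matrix (Fin d) (Fin d) ℂ := (g : Matrix (Fin d) (Fin d) ℂ)
    have hvg : vgᴴ * P * vg = P := hinv ⟨g, hgG⟩
    have hstar : star (S * vg * T) = T * vgᴴ * S := by
      simp only [Matrix.star_eq_conjTranspose, Matrix.conjTranspose_mul, hSH, hTH]
      noncomm_ring
    rw [hstar]
    calc T * vgᴴ * S * (S * vg * T) = T * (vgᴴ * (S * S) * vg) * T := by noncomm_ring
      _ = T * (vgᴴ * P * vg) * T := by rw [hS2]
      _ = T * P * T := by rw [hvg]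
      _ = T * (S * S) * T := by rw [hS2]
      _ = (T * S) * (S * T) := by noncomm_ring
      _ = 1 := by rw [hTS, hST, Matrix.one_mul]
  obtain ⟨A', hA'n, hA'c, hA'i⟩ := hj G' hG'fin hG'U
  refine ⟨A'.comap e.toMonoidHom, hA'n.comap e.toMonoidHom, ?_, ?_⟩
  · intro x y
    have hx : e ↑x ∈ A' := x.2
    have hy : e ↑y ∈ A' := y.2
    have h := hA'c ⟨e ↑x, hx⟩ ⟨e ↑y, hy⟩
    have h2 : e ↑x * e ↑y = e ↑y * e ↑x := Subtype.ext_iff.mp h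
    rw [← _root_.map_mul, ← _root_.map_mul] at h2
    exact Subtype.ext (e.injective h2)
  · rw [Subgroup.index_comap_of_surjective _ e.surjective]
    exact hA'i

/-- **Jordan's theorem on finite linear groups (1877).**
For every natural number `d` there exists `j : ℕ` such that every finite subgroup `G` of
`GL_d(ℂ)` contains a normal abelian subgroup `A` of index `[G : A] ≤ j`. -/
theorem jordan_property_of_linear_groups (d : ℕ) :
    ∃ j : ℕ, ∀ G : Subgroup (Matrix.GeneralLinearGroup (Fin d) ℂ), Finite G →
      ∃ A : Subgroup G, A.Normal ∧ (∀ x y : A, x * y = y * x) ∧ A.index ≤ j := by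
  rcases Nat.eq_zero_or_pos d with hd | hd
  · -- trivial case `d = 0`
    subst hd
    haveI : Subsingleton (Matrix (Fin 0) (Fin 0) ℂ) :=
      ⟨fun a b => by ext i; exact i.elim0⟩
    haveI : Subsingleton (Matrix.GeneralLinearGroup (Fin 0) ℂ) :=
      ⟨fun a b => Units.ext (Subsingleton.elim _ _)⟩
    refine ⟨1, fun G _ => ⟨⊤, ⟨fun n _ g => Subgroup.mem_top _⟩, ?_, ?_⟩⟩
    · intro x y
      refine Subtype.ext (Subtype.ext ?_)
      exact Subsingleton.elim _ _
    · rw [Subgroup.index_top]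
  · exact jordan_pos d hd
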